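/- Let W₁,…,W_K be real random variables and ε ∈ {±1}^K an independent random sign vector with ε_k = +1 for k in a fixed set S (non-nulls) and ε_k uniform on {±1} i.i.d. for k ∉ S. If (W₁,…,W_K) is equal in distribution to (ε₁W₁,…,ε_K W_K), then conditional on (|W₁|,…,|W_K|), the signs {sign(W_k) : k ∉ S, W_k ≠ 0} are i.i.d. uniform on {±1}. -/

import Mathlib

open MeasureTheory ProbabilityTheory
open scoped ENNReal

theorem sign_symmetry_conditional_iid_signs
    {Ω : Type*} [MeasurableSpace Ω] (μ : Measure Ω) [IsProbabilityMeasure μ]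
    {K : ℕ} (W : Fin K → Ω → ℝ) (hW : ∀ k, Measurable (W k))
    (S : Finset (Fin K))
    (ε : Fin K → Ω → ℝ) (hεmeas : ∀ k, Measurable (ε k))
    (hεS : ∀ k ∈ S, ∀ ω, ε k ω = 1)
    (hεpm : ∀ k ∉ S, ∀ ω, ε k ω = 1 ∨ ε k ω = -1)
    (hεunif : ∀ k ∉ S, μ {ω | ε k ω = 1} = 1/2)
    (hεiid : iIndepFun ε μ)
    (hεW : IndepFun (fun ω k => ε k ω) (fun ω k => W k ω) μ)
    (hdist : μ.map (fun ω (k : Fin K) => W k ω)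
      = μ.map (fun ω (k : Fin K) => ε k ω * W k ω)) :
    ∀ τ : Fin K → ℝ, (∀ k ∉ S, τ k = 1 ∨ τ k = -1) →
    ∀ E : Set (Fin K → ℝ), MeasurableSet E →
      μ ({ω | ∀ k ∉ S, W k ω ≠ 0 ∧ Real.sign (W k ω) = τ k}
          ∩ {ω | (fun k => |W k ω|) ∈ E})
        = (1/2) ^ ((Sᶜ : Finset (Fin K)).card)
            * μ ({ω | ∀ k ∉ S, W k ω ≠ 0} ∩ {ω | (fun k => |W k ω|) ∈ E}) := by
  classical
  intro τ hτ E hE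
  set c := (Sᶜ : Finset (Fin K)).card with hc
  -- basic measurability
  have msign : Measurable Real.sign := by
    unfold Real.sign
    exact Measurable.ite (measurableSet_lt measurable_id measurable_const) measurable_const
      (Measurable.ite (measurableSet_lt measurable_const measurable_id) measurable_const
        measurable_const)
  have mWvec : Measurable (fun ω (k : Fin K) => W k ω) :=
    measurable_pi_lambda _ hW
  have mεWvec : Measurable (fun ω (k : Fin K) => ε k ω * W k ω) :=
    measurable_pi_lambda _ (fun k => (hεmeas k).mul (hW k))
  -- sign helpers
  have hε0 : ∀ k ω, ε k ω ≠ 0 := by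
    intro k ω
    by_cases hk : k ∈ S
    · rw [hεS k hk ω]; norm_num
    · rcases hεpm k hk ω with h | h <;> rw [h] <;> norm_num
  have hεabs : ∀ k ω, |ε k ω| = 1 := by
    intro k ω
    by_cases hk : k ∈ S
    · rw [hεS k hk ω]; norm_num
    · rcases hεpm k hk ω with h | h <;> rw [h] <;> norm_num
  have habs : ∀ ω, (fun k => |ε k ω * W k ω|) = (fun k => |W k ω|) := by
    intro ω; funext k; rw [abs_mul, hεabs k ω, one_mul]
  have hsgn : ∀ k ω, k ∉ S → Real.sign (ε k ω * W k ω) = ε k ω * Real.sign (W k ω) := by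
    intro k ω hk
    rcases hεpm k hk ω with h | h <;> rw [h]
    · rw [one_mul, one_mul]
    · rw [neg_one_mul, neg_one_mul, Real.sign_neg]
  -- sign patterns indexed by subsets of Sᶜ
  set p : Finset (Fin K) → Fin K → ℝ := fun Ts k => if k ∈ Ts then -1 else 1 with hp
  have hppm : ∀ Ts k, p Ts k = 1 ∨ p Ts k = -1 := by
    intro Ts k; by_cases h : k ∈ Ts <;> simp [hp, h]
  -- the G sets: sign pattern events in the product space
  set Gp : (Fin K → ℝ) → Set (Fin K → ℝ) := fun pat =>
    {x | ∀ k ∉ S, x k ≠ 0 ∧ Real.sign (x k) = pat k} ∩ {x | (fun k => |x k|) ∈ E} with hGp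
  have mGp : ∀ pat, MeasurableSet (Gp pat) := by
    intro pat
    apply MeasurableSet.inter
    · have : {x : Fin K → ℝ | ∀ k ∉ S, x k ≠ 0 ∧ Real.sign (x k) = pat k}
          = ⋂ k, ⋂ (_ : k ∉ S), ({x : Fin K → ℝ | x k ≠ 0} ∩ {x | Real.sign (x k) = pat k}) := by
        ext x; simp [Set.mem_iInter, Set.mem_setOf_eq]
      rw [this]
      refine MeasurableSet.iInter fun k => MeasurableSet.iInter fun _ => MeasurableSet.inter ?_ ?_
      · have hm : Measurable (fun x : Fin K → ℝ => x k) := measurable_pi_apply k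
        exact (hm (measurableSet_singleton (0:ℝ))).compl
      · have hm : Measurable (fun x : Fin K → ℝ => Real.sign (x k)) :=
          msign.comp (measurable_pi_apply k)
        exact hm (measurableSet_singleton (pat k))
    · exact (measurable_pi_lambda _ (fun k => (measurable_pi_apply k).abs)) hE
  -- measure of an ε sign-pattern event
  have hεhalf : ∀ k ∉ S, ∀ a : ℝ, a = 1 ∨ a = -1 → μ (ε k ⁻¹' {a}) = 1/2 := by
    intro k hk a ha
    have h1 : (ε k ⁻¹' {(1:ℝ)}) = {ω | ε k ω = 1} := rfl
    rcases ha with rfl | rfl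
    · rw [h1]; exact hεunif k hk
    · have : (ε k ⁻¹' {(-1:ℝ)}) = {ω | ε k ω = 1}ᶜ := by
        ext ω
        simp only [Set.mem_preimage, Set.mem_singleton_iff, Set.mem_compl_iff, Set.mem_setOf_eq]
        rcases hεpm k hk ω with h | h <;> rw [h] <;> norm_num
      have hms : MeasurableSet {ω | ε k ω = 1} := by
        rw [← h1]; exact (hεmeas k) (measurableSet_singleton (1:ℝ))
      rw [this, measure_compl hms (measure_ne_top μ _), measure_univ, hεunif k hk,
        one_div, ENNReal.one_sub_inv_two]
  have hεprob : ∀ q : Fin K → ℝ, (∀ k ∉ S, q k = 1 ∨ q k = -1) →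
      μ (⋂ k ∈ (Sᶜ : Finset (Fin K)), ε k ⁻¹' {q k}) = (1/2) ^ c := by
    intro q hq
    rw [hεiid.meas_biInter (fun k _ => ⟨{q k}, measurableSet_singleton _, rfl⟩)]
    rw [Finset.prod_congr rfl (fun k hk =>
      hεhalf k (Finset.mem_compl.mp hk) (q k) (hq k (Finset.mem_compl.mp hk)))]
    rw [Finset.prod_const, hc]
  -- rectangle probability
  have hRect : ∀ q : Fin K → ℝ, (∀ k ∉ S, q k = 1 ∨ q k = -1) →
      ∀ Gs : Set (Fin K → ℝ), MeasurableSet Gs →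
      μ ((⋂ k ∈ (Sᶜ : Finset (Fin K)), ε k ⁻¹' {q k}) ∩ ((fun ω (k : Fin K) => W k ω) ⁻¹' Gs))
        = (1/2) ^ c * μ ((fun ω (k : Fin K) => W k ω) ⁻¹' Gs) := by
    intro q hq Gs hGs
    have hset : (⋂ k ∈ (Sᶜ : Finset (Fin K)), ε k ⁻¹' {q k})
        = (fun ω (k : Fin K) => ε k ω) ⁻¹' (⋂ k ∈ (Sᶜ : Finset (Fin K)), (fun e : Fin K → ℝ => e k) ⁻¹' {q k}) := by
      ext ω; simp [Set.mem_iInter]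
    have hmset : MeasurableSet (⋂ k ∈ (Sᶜ : Finset (Fin K)), (fun e : Fin K → ℝ => e k) ⁻¹' {q k}) := by
      refine MeasurableSet.biInter (Finset.countable_toSet _) fun k _ =>
        measurable_pi_apply k (measurableSet_singleton _)
    rw [hset, hεW.measure_inter_preimage_eq_mul _ _ hmset hGs, ← hset, hεprob q hq]
  -- the partition of the sign patterns
  have hGdisj : (↑((Sᶜ : Finset (Fin K)).powerset) : Set (Finset (Fin K))).PairwiseDisjoint
      (fun Ts => (fun ω (k : Fin K) => W k ω) ⁻¹' Gp (p Ts)) := by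
    intro T₁ h₁ T₂ h₂ hne
    rw [Finset.coe_powerset, Set.mem_preimage, Set.mem_powerset_iff] at h₁ h₂
    rw [Function.onFun, Set.disjoint_left]
    rintro ω ⟨hω₁, -⟩ ⟨hω₂, -⟩
    have hex : ∃ k, ¬ (k ∈ T₁ ↔ k ∈ T₂) := by
      by_contra hcon
      push_neg at hcon
      exact hne (Finset.ext fun k => hcon k)
    obtain ⟨k, hk⟩ := hex
    have hkS : k ∉ S := by
      by_cases h : k ∈ T₁
      · have : k ∈ (Sᶜ : Finset (Fin K)) := h₁ h
        exact Finset.mem_compl.mp this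
      · have h2 : k ∈ T₂ := by tauto
        have : k ∈ (Sᶜ : Finset (Fin K)) := h₂ h2
        exact Finset.mem_compl.mp this
    have e₁ := (hω₁ k hkS).2
    have e₂ := (hω₂ k hkS).2
    have : p T₁ k = p T₂ k := by rw [← e₁, ← e₂]
    by_cases h : k ∈ T₁
    · have h2 : k ∉ T₂ := by tauto
      simp only [hp, if_pos h, if_neg h2] at this; norm_num at this
    · have h2 : k ∈ T₂ := by tauto
      simp only [hp, if_neg h, if_pos h2] at this; norm_num at this
  have hGunion : (⋃ Ts ∈ (Sᶜ : Finset (Fin K)).powerset,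
        (fun ω (k : Fin K) => W k ω) ⁻¹' Gp (p Ts))
      = {ω | ∀ k ∉ S, W k ω ≠ 0} ∩ {ω | (fun k => |W k ω|) ∈ E} := by
    ext ω
    simp only [Set.mem_iUnion, Set.mem_preimage, Set.mem_inter_iff, Set.mem_setOf_eq, hGp]
    constructor
    · rintro ⟨Ts, -, ⟨hs, hE2⟩⟩
      exact ⟨fun k hk => (hs k hk).1, hE2⟩
    · rintro ⟨h0, hE2⟩
      refine ⟨(Sᶜ : Finset (Fin K)).filter (fun k => Real.sign (W k ω) = -1),
        Finset.mem_powerset.mpr (Finset.filter_subset _ _), ⟨fun k hk => ⟨h0 k hk, ?_⟩, hE2⟩⟩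
      rcases Real.sign_apply_eq_of_ne_zero _ (h0 k hk) with h | h
      · rw [h]
        simp only [hp]
        rw [if_pos (Finset.mem_filter.mpr ⟨Finset.mem_compl.mpr hk, h⟩)]
      · rw [h]
        simp only [hp]
        rw [if_neg]
        intro hcon
        have := (Finset.mem_filter.mp hcon).2
        rw [h] at this; norm_num at this
  -- the main decomposition of the symmetrized event
  have hdecomp : (fun ω (k : Fin K) => ε k ω * W k ω) ⁻¹' Gp τ
      = ⋃ Ts ∈ (Sᶜ : Finset (Fin K)).powerset,
          ((⋂ k ∈ (Sᶜ : Finset (Fin K)), ε k ⁻¹' {τ k * p Ts k})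
            ∩ ((fun ω (k : Fin K) => W k ω) ⁻¹' Gp (p Ts))) := by
    ext ω
    simp only [Set.mem_preimage, Set.mem_iUnion, Set.mem_inter_iff, Set.mem_iInter,
      Set.mem_setOf_eq, hGp, Set.mem_singleton_iff]
    constructor
    · rintro ⟨hs, hE2⟩
      set Ts := (Sᶜ : Finset (Fin K)).filter (fun k => Real.sign (W k ω) = -1) with hTs
      have hW0 : ∀ k ∉ S, W k ω ≠ 0 := by
        intro k hk h0
        exact (hs k hk).1 (by rw [h0, mul_zero])
      have hpTs : ∀ k ∉ S, p Ts k = Real.sign (W k ω) := by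
        intro k hk
        rcases Real.sign_apply_eq_of_ne_zero _ (hW0 k hk) with h | h
        · rw [h]
          simp only [hp, hTs]
          rw [if_pos (Finset.mem_filter.mpr ⟨Finset.mem_compl.mpr hk, h⟩)]
        · rw [h]
          simp only [hp, hTs]
          rw [if_neg]
          intro hcon
          have := (Finset.mem_filter.mp hcon).2
          rw [h] at this; norm_num at this
      refine ⟨Ts, Finset.mem_powerset.mpr (Finset.filter_subset _ _), fun k hk => ?_,
        fun k hk => ⟨hW0 k hk, (hpTs k hk).symm⟩, by rwa [habs ω] at hE2⟩
      -- ε k ω = τ k * p Ts k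
      have hk' : k ∉ S := Finset.mem_compl.mp hk
      have heq : ε k ω * Real.sign (W k ω) = τ k := by
        rw [← hsgn k ω hk']; exact (hs k hk').2
      have hss : Real.sign (W k ω) * Real.sign (W k ω) = 1 := by
        rcases Real.sign_apply_eq_of_ne_zero _ (hW0 k hk') with h | h <;> rw [h] <;> norm_num
      rw [hpTs k hk']
      calc ε k ω = ε k ω * (Real.sign (W k ω) * Real.sign (W k ω)) := by rw [hss, mul_one]
        _ = (ε k ω * Real.sign (W k ω)) * Real.sign (W k ω) := by ring
        _ = τ k * Real.sign (W k ω) := by rw [heq]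
    · rintro ⟨Ts, -, hεeq, hG, hE2⟩
      constructor
      · intro k hk
        have hW0 := (hG k hk).1
        refine ⟨mul_ne_zero (hε0 k ω) hW0, ?_⟩
        rw [hsgn k ω hk, hεeq k (Finset.mem_compl.mpr hk), (hG k hk).2]
        have hpp : p Ts k * p Ts k = 1 := by
          rcases hppm Ts k with h | h <;> rw [h] <;> norm_num
        calc τ k * p Ts k * p Ts k = τ k * (p Ts k * p Ts k) := by ring
          _ = τ k := by rw [hpp, mul_one]
      · rwa [habs ω]
  -- now the computation
  have hLHS : {ω | ∀ k ∉ S, W k ω ≠ 0 ∧ Real.sign (W k ω) = τ k}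
      ∩ {ω | (fun k => |W k ω|) ∈ E} = (fun ω (k : Fin K) => W k ω) ⁻¹' Gp τ := rfl
  rw [hLHS, ← Measure.map_apply mWvec (mGp τ), hdist, Measure.map_apply mεWvec (mGp τ), hdecomp]
  have hmeasterm : ∀ Ts ∈ (Sᶜ : Finset (Fin K)).powerset,
      MeasurableSet ((⋂ k ∈ (Sᶜ : Finset (Fin K)), ε k ⁻¹' {τ k * p Ts k})
        ∩ ((fun ω (k : Fin K) => W k ω) ⁻¹' Gp (p Ts))) := by
    intro Ts _
    refine MeasurableSet.inter ?_ (mWvec (mGp _))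
    exact MeasurableSet.biInter (Finset.countable_toSet _)
      (fun k _ => (hεmeas k) (measurableSet_singleton _))
  have htermdisj : (↑((Sᶜ : Finset (Fin K)).powerset) : Set (Finset (Fin K))).PairwiseDisjoint
      (fun Ts => (⋂ k ∈ (Sᶜ : Finset (Fin K)), ε k ⁻¹' {τ k * p Ts k})
        ∩ ((fun ω (k : Fin K) => W k ω) ⁻¹' Gp (p Ts))) := by
    intro T₁ h₁ T₂ h₂ hne
    exact (hGdisj h₁ h₂ hne).mono Set.inter_subset_right Set.inter_subset_right
  rw [measure_biUnion_finset htermdisj hmeasterm]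
  have hterm : ∀ Ts ∈ (Sᶜ : Finset (Fin K)).powerset,
      μ ((⋂ k ∈ (Sᶜ : Finset (Fin K)), ε k ⁻¹' {τ k * p Ts k})
        ∩ ((fun ω (k : Fin K) => W k ω) ⁻¹' Gp (p Ts)))
      = (1/2) ^ c * μ ((fun ω (k : Fin K) => W k ω) ⁻¹' Gp (p Ts)) := by
    intro Ts _
    refine hRect _ (fun k hk => ?_) _ (mGp _)
    rcases hτ k hk with h | h <;> rcases hppm Ts k with h' | h' <;> rw [h, h'] <;> norm_num
  rw [Finset.sum_congr rfl hterm, ← Finset.mul_sum,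
    ← measure_biUnion_finset hGdisj (fun Ts _ => mWvec (mGp _)), hGunion]
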